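/- If T is a paranormal operator, then for every unit vector x the sequence ‖T^n x‖^{1/n} is monotone nondecreasing in n; in particular ‖Tx‖ ≤ ‖T^n x‖^{1/n} for all n ≥ 1. -/

import Mathlib

theorem stmt_14 {H : Type*} [NormedAddCommGroup H] [InnerProductSpace ℂ H] [CompleteSpace H]
    (T : H →L[ℂ] H)
    (hpara : ∀ y : H, ‖T y‖ ^ 2 ≤ ‖(T ^ 2) y‖ * ‖y‖)
    (x : H) (hx : ‖x‖ = 1) :
    (∀ n : ℕ, 1 ≤ n →
        ‖(T ^ n) x‖ ^ ((1 : ℝ) / n) ≤ ‖(T ^ (n + 1)) x‖ ^ ((1 : ℝ) / (n + 1))) ∧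
      (∀ n : ℕ, 1 ≤ n → ‖T x‖ ≤ ‖(T ^ n) x‖ ^ ((1 : ℝ) / n)) := by
  set a : ℕ → ℝ := fun n => ‖(T ^ n) x‖ with ha
  have happ : ∀ n : ℕ, (T ^ (n + 1)) x = T ((T ^ n) x) := by
    intro n
    rw [pow_succ']
    rfl
  have key : ∀ n : ℕ, a (n + 1) ^ 2 ≤ a (n + 2) * a n := by
    intro n
    have h := hpara ((T ^ n) x)
    have h2 : (T ^ 2) ((T ^ n) x) = (T ^ (n + 2)) x := by
      have : T ^ (n + 2) = T ^ 2 * T ^ n := by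
        rw [show n + 2 = 2 + n by ring, pow_add]
      rw [this]; rfl
    rw [h2, ← happ] at h
    exact h
  by_cases hTx : T x = 0
  · have hzero : ∀ n : ℕ, 1 ≤ n → (T ^ n) x = 0 := by
      intro n hn
      obtain ⟨m, rfl⟩ := Nat.exists_eq_add_of_le hn
      induction m with
      | zero => simpa using hTx
      | succ k ih =>
        have : (T ^ (1 + (k + 1))) x = T ((T ^ (1 + k)) x) := happ (1 + k)
        rw [this, ih (by omega), map_zero]
    constructor
    · intro n hn
      have h1 : a n = 0 := by rw [ha]; simp [hzero n hn]
      have h2 : a (n + 1) = 0 := by rw [ha]; simp [hzero (n + 1) (by omega)]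
      have hnr : (0:ℝ) < (n:ℝ) := by exact_mod_cast hn
      have hn0 : (1:ℝ)/(n:ℝ) ≠ 0 := by positivity
      have hn1 : (1:ℝ)/((n:ℝ)+1) ≠ 0 := by positivity
      show a n ^ ((1:ℝ)/n) ≤ a (n+1) ^ ((1:ℝ)/((n:ℝ)+1))
      rw [h1, h2, Real.zero_rpow hn0, Real.zero_rpow hn1]
    · intro n hn
      have h1 : a n = 0 := by rw [ha]; simp [hzero n hn]
      show ‖T x‖ ≤ a n ^ ((1:ℝ)/n)
      rw [hTx, norm_zero, h1]
      positivity
  · -- positivity of a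
    have ha0 : a 0 = 1 := by simpa [ha] using hx
    have ha1 : 0 < a 1 := by
      have : (T ^ 1) x = T x := by simp
      rw [ha]; simpa [this] using norm_pos_iff.mpr hTx
    have pos : ∀ n, 0 < a n := by
      intro n
      induction n using Nat.strong_induction_on with
      | _ n ih =>
        match n with
        | 0 => rw [ha0]; norm_num
        | 1 => exact ha1
        | (k + 2) =>
          have hk := key k
          have h1 : 0 < a (k + 1) := ih (k + 1) (by omega)
          have h0 : 0 < a k := ih k (by omega)
          nlinarith [hk]
    set b : ℕ → ℝ := fun n => a (n + 1) / a n with hb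
    have bpos : ∀ n, 0 < b n := fun n => div_pos (pos (n + 1)) (pos n)
    have bmono : Monotone b := by
      apply monotone_nat_of_le_succ
      intro n
      rw [hb]
      rw [div_le_div_iff₀ (pos n) (pos (n + 1))]
      have := key n
      nlinarith [pos n, pos (n + 1), pos (n + 2)]
    have aprod : ∀ n, a n = ∏ k ∈ Finset.range n, b k := by
      intro n
      induction n with
      | zero => simpa using ha0
      | succ k ih =>
        rw [Finset.prod_range_succ, ← ih, hb]
        rw [mul_comm, div_mul_cancel₀ _ (pos k).ne']
    have powkey : ∀ n : ℕ, a n ^ (n + 1) ≤ a (n + 1) ^ n := by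
      intro n
      have h1 : a n ≤ b n ^ n := by
        rw [aprod n]
        calc ∏ k ∈ Finset.range n, b k ≤ ∏ k ∈ Finset.range n, b n := by
              apply Finset.prod_le_prod
              · intro k _; exact (bpos k).le
              · intro k hk
                exact bmono (le_of_lt (Finset.mem_range.mp hk))
          _ = b n ^ n := by rw [Finset.prod_const, Finset.card_range]
      have h2 : b n ^ n = a (n + 1) ^ n / a n ^ n := by
        rw [hb, div_pow]
      rw [h2, le_div_iff₀ (pow_pos (pos n) n)] at h1
      calc a n ^ (n + 1) = a n * a n ^ n := by ring
        _ ≤ a (n + 1) ^ n := h1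
    have step : ∀ n : ℕ, 1 ≤ n → a n ^ ((1:ℝ)/n) ≤ a (n + 1) ^ ((1:ℝ)/(n + 1)) := by
      intro n hn
      have hn0 : (n:ℝ) ≠ 0 := Nat.cast_ne_zero.mpr (by omega)
      have hexp : (0:ℝ) ≤ 1 / ((n:ℝ) * ((n:ℝ) + 1)) := by positivity
      have h := Real.rpow_le_rpow (pow_nonneg (pos n).le (n + 1))
        (powkey n) hexp
      rw [← Real.rpow_natCast (a n) (n + 1), ← Real.rpow_natCast (a (n + 1)) n,
        ← Real.rpow_mul (pos n).le, ← Real.rpow_mul (pos (n + 1)).le] at h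
      have e1 : ((↑(n + 1) : ℝ)) * (1 / ((n:ℝ) * ((n:ℝ) + 1))) = 1 / (n:ℝ) := by
        push_cast; field_simp
      have e2 : ((n : ℝ)) * (1 / ((n:ℝ) * ((n:ℝ) + 1))) = 1 / ((n:ℝ) + 1) := by
        field_simp
      rw [e1, e2] at h
      exact h
    have second : ∀ n : ℕ, 1 ≤ n → ‖T x‖ ≤ a n ^ ((1:ℝ)/(n:ℝ)) := by
      intro n hn
      induction n, hn using Nat.le_induction with
      | base =>
        have h1 : ((1:ℝ)/((1:ℕ):ℝ)) = 1 := by norm_num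
        rw [h1, Real.rpow_one]
        simp [ha]
      | succ k hk ih =>
        refine le_trans ih ?_
        have := step k hk
        push_cast
        push_cast at this
        exact this
    exact ⟨fun n hn => step n hn, fun n hn => by push_cast; exact_mod_cast second n hn⟩
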